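/- If G is a balanced bipartite graph of order 2n that has at most d·n edges for some non-negative real d, then G has a bihole of order at least n/(d+1) − 2. -/

import Mathlib

open Finset

/-- `A`, `B` form a bipartition of the simple graph `G`: they are disjoint,
cover all vertices, and every edge joins `A` to `B`. -/
def IsBipartition {V : Type} [DecidableEq V] [Fintype V] (G : SimpleGraph V) (A B : Finset V) : Prop :=
  Disjoint A B ∧ A ∪ B = Finset.univ ∧
    ∀ u v : V, G.Adj u v → (u ∈ A ∧ v ∈ B) ∨ (u ∈ B ∧ v ∈ A)

/-- `G` (with bipartition `A`, `B`) has a bihole of order `k`: an independent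
set `I` with `|I ∩ A| = |I ∩ B| = k`. -/
def HasBihole {V : Type} [DecidableEq V] [Fintype V] (G : SimpleGraph V) (A B : Finset V) (k : ℕ) : Prop :=
  ∃ I : Finset V, (∀ u ∈ I, ∀ v ∈ I, ¬ G.Adj u v) ∧ (I ∩ A).card = k ∧ (I ∩ B).card = k

/-- If `G` is a balanced bipartite graph of order `2n` with at most `d·n` edges
for some non-negative real `d`, then `G` has a bihole of order at least
`n/(d+1) − 2`. -/
theorem stmt1 (d : ℝ) (hd : 0 ≤ d) (n : ℕ)
    (V : Type) [DecidableEq V] [Fintype V] (G : SimpleGraph V) [DecidableRel G.Adj]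
    (A B : Finset V) (hbip : IsBipartition G A B)
    (hA : A.card = n) (hB : B.card = n)
    (hm : (G.edgeFinset.card : ℝ) ≤ d * n) :
    ∃ k : ℕ, HasBihole G A B k ∧ (k : ℝ) ≥ (n : ℝ) / (d + 1) - 2 := by
  obtain ⟨hdisj, hcover, hadj⟩ := hbip
  have hd1 : (0:ℝ) < d + 1 := by linarith
  -- neighbors of vertices in A lie in B
  have hAB : ∀ a ∈ A, ∀ v : V, G.Adj a v → v ∈ B := by
    intro a ha v h
    rcases hadj a v h with ⟨_, hv⟩ | ⟨haB, _⟩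
    · exact hv
    · exact absurd haB (Finset.disjoint_left.1 hdisj ha)
  -- no edges inside A
  have hAA : ∀ a ∈ A, ∀ a' ∈ A, ¬ G.Adj a a' := by
    intro a ha a' ha' h
    exact Finset.disjoint_left.1 hdisj ha' (hAB a ha a' h)
  -- no edges inside B
  have hBB : ∀ b ∈ B, ∀ b' ∈ B, ¬ G.Adj b b' := by
    intro b hb b' hb' h
    rcases hadj b b' h with ⟨hbA, _⟩ | ⟨_, hb'A⟩
    · exact Finset.disjoint_left.1 hdisj hbA hb
    · exact Finset.disjoint_left.1 hdisj hb'A hb'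
  set k : ℕ := ⌊(n:ℝ) / (d + 1)⌋₊ with hk
  have hk_le : (k:ℝ) ≤ (n:ℝ) / (d + 1) := Nat.floor_le (by positivity)
  have hk_ge : (n:ℝ) / (d + 1) - 1 ≤ (k:ℝ) := le_of_lt (Nat.sub_one_lt_floor _)
  have hkn : k ≤ n := by
    have h1 : (n:ℝ) / (d+1) ≤ (n:ℝ) := by
      apply div_le_self (by positivity); linarith
    exact_mod_cast hk_le.trans h1
  -- total degree of A is at most the number of edges
  have htot : (∑ a ∈ A, G.degree a) ≤ G.edgeFinset.card := by
    rw [show (∑ a ∈ A, G.degree a) = (A.sigma (fun a => G.neighborFinset a)).card by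
      rw [Finset.card_sigma]; rfl]
    apply Finset.card_le_card_of_injOn (fun p => s(p.1, p.2))
    · intro p hp
      rw [Finset.mem_coe, Finset.mem_sigma] at hp
      rw [Finset.mem_coe, SimpleGraph.mem_edgeFinset, SimpleGraph.mem_edgeSet]
      exact (SimpleGraph.mem_neighborFinset _ _ _).1 hp.2
    · intro p hp q hq hpq
      simp only [Finset.coe_sigma, Set.mem_sigma_iff, Finset.mem_coe] at hp hq
      rcases Sym2.eq_iff.1 hpq with ⟨h1, h2⟩ | ⟨h1, h2⟩
      · exact Sigma.ext h1 (heq_of_eq h2)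
      · exfalso
        have hadj1 : G.Adj p.1 p.2 := (SimpleGraph.mem_neighborFinset _ _ _).1 hp.2
        exact hAA p.1 hp.1 p.2 (h2 ▸ hq.1) hadj1
  -- choose a k-subset S of A with minimum degree sum
  have hne : (A.powersetCard k).Nonempty := by
    obtain ⟨S, hS, hScard⟩ := Finset.exists_subset_card_eq (hA ▸ hkn)
    exact ⟨S, Finset.mem_powersetCard.2 ⟨hS, hScard⟩⟩
  obtain ⟨S, hSmem, hSmin⟩ := Finset.exists_min_image (A.powersetCard k)
    (fun S => ∑ a ∈ S, G.degree a) hne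
  obtain ⟨hSA, hScard⟩ := Finset.mem_powersetCard.1 hSmem
  -- exchange property: each vertex of S has degree ≤ each vertex of A \ S
  have hexch : ∀ a ∈ S, ∀ b ∈ A \ S, G.degree a ≤ G.degree b := by
    intro a ha b hb
    rw [Finset.mem_sdiff] at hb
    have hbnot : b ∉ S.erase a := fun h => hb.2 (Finset.mem_of_mem_erase h)
    have hmem' : insert b (S.erase a) ∈ A.powersetCard k := by
      rw [Finset.mem_powersetCard]
      constructor
      · intro x hx
        rcases Finset.mem_insert.1 hx with rfl | hx
        · exact hb.1
        · exact hSA (Finset.mem_of_mem_erase hx)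
      · have hk1 : 1 ≤ k := hScard ▸ Finset.card_pos.2 ⟨a, ha⟩
        rw [Finset.card_insert_of_notMem hbnot, Finset.card_erase_of_mem ha, hScard]
        omega
    have h1 : (∑ x ∈ S, G.degree x) ≤ ∑ x ∈ insert b (S.erase a), G.degree x := hSmin _ hmem'
    rw [Finset.sum_insert hbnot] at h1
    have h2 : G.degree a + ∑ x ∈ S.erase a, G.degree x = ∑ x ∈ S, G.degree x :=
      Finset.add_sum_erase S (fun a => G.degree a) ha
    omega
  -- averaging: n * (sum over S) ≤ k * (sum over A)
  have havg : (n - k) * (∑ a ∈ S, G.degree a) ≤ k * (∑ b ∈ A \ S, G.degree b) := by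
    have h1 : ∀ b ∈ A \ S, (∑ a ∈ S, G.degree a) ≤ k * G.degree b := by
      intro b hb
      have := Finset.sum_le_card_nsmul S (fun a => G.degree a) (G.degree b)
        (fun a ha => hexch a ha b hb)
      simpa [hScard, mul_comm] using this
    calc (n - k) * (∑ a ∈ S, G.degree a) = ∑ _b ∈ A \ S, (∑ a ∈ S, G.degree a) := by
          rw [Finset.sum_const, Finset.card_sdiff_of_subset hSA, hA, hScard, smul_eq_mul]
      _ ≤ ∑ b ∈ A \ S, k * G.degree b := Finset.sum_le_sum h1
      _ = k * (∑ b ∈ A \ S, G.degree b) := by rw [Finset.mul_sum]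
  have havg2 : n * (∑ a ∈ S, G.degree a) ≤ k * (∑ a ∈ A, G.degree a) := by
    have hsplit : (∑ b ∈ A \ S, G.degree b) + (∑ a ∈ S, G.degree a) = ∑ a ∈ A, G.degree a :=
      Finset.sum_sdiff hSA
    calc n * (∑ a ∈ S, G.degree a)
        = (n - k) * (∑ a ∈ S, G.degree a) + k * (∑ a ∈ S, G.degree a) := by
          rw [← add_mul]; congr 1; omega
      _ ≤ k * (∑ b ∈ A \ S, G.degree b) + k * (∑ a ∈ S, G.degree a) :=
          Nat.add_le_add_right havg _
      _ = k * ((∑ b ∈ A \ S, G.degree b) + ∑ a ∈ S, G.degree a) := (Nat.mul_add _ _ _).symm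
      _ = k * (∑ a ∈ A, G.degree a) := by rw [hsplit]
  -- the degree sum over S is at most d * k (real)
  have hsumS : ((∑ a ∈ S, G.degree a : ℕ) : ℝ) ≤ d * k := by
    rcases Nat.eq_zero_or_pos n with hn0 | hn0
    · have : S = ∅ := Finset.card_eq_zero.1 (by omega)
      simp [this]; positivity
    · have hnR : (0:ℝ) < (n:ℝ) := by exact_mod_cast hn0
      have h1 : ((n:ℝ)) * ((∑ a ∈ S, G.degree a : ℕ) : ℝ) ≤ (k:ℝ) * (G.edgeFinset.card : ℝ) := by
        have := havg2.trans (Nat.mul_le_mul_left k htot)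
        exact_mod_cast this
      have h2 : (k:ℝ) * (G.edgeFinset.card : ℝ) ≤ (k:ℝ) * (d * n) :=
        mul_le_mul_of_nonneg_left hm (by positivity)
      nlinarith
  -- the neighborhood of S
  set N : Finset V := S.biUnion (fun a => G.neighborFinset a) with hN
  have hNB : N ⊆ B := by
    intro v hv
    obtain ⟨a, ha, hv⟩ := Finset.mem_biUnion.1 hv
    exact hAB a (hSA ha) v ((SimpleGraph.mem_neighborFinset _ _ _).1 hv)
  have hNcard : ((N.card : ℕ) : ℝ) ≤ d * k := by
    have := Finset.card_biUnion_le (s := S) (t := fun a => G.neighborFinset a)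
    have h2 : ((N.card : ℕ) : ℝ) ≤ ((∑ a ∈ S, G.degree a : ℕ) : ℝ) := by exact_mod_cast this
    linarith
  -- k*(d+1) ≤ n
  have hkd : (k:ℝ) * (d + 1) ≤ (n:ℝ) := by
    rw [← le_div_iff₀ hd1] at *; exact hk_le
  -- B \ N has at least k elements
  have hBN : k ≤ (B \ N).card := by
    have hc : (B \ N).card = n - N.card := by rw [Finset.card_sdiff_of_subset hNB, hB]
    have hNn : N.card ≤ n := hB ▸ Finset.card_le_card hNB
    have : (k:ℝ) ≤ ((n - N.card : ℕ) : ℝ) := by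
      rw [Nat.cast_sub hNn]; nlinarith
    rw [hc]; exact_mod_cast this
  obtain ⟨T, hTsub, hTcard⟩ := Finset.exists_subset_card_eq hBN
  have hTB : T ⊆ B := fun x hx => (Finset.mem_sdiff.1 (hTsub hx)).1
  have hST : ∀ a ∈ S, ∀ b ∈ T, ¬ G.Adj a b := by
    intro a ha b hb h
    have : b ∈ N := Finset.mem_biUnion.2 ⟨a, ha, (SimpleGraph.mem_neighborFinset _ _ _).2 h⟩
    exact (Finset.mem_sdiff.1 (hTsub hb)).2 this
  refine ⟨k, ⟨S ∪ T, ?_, ?_, ?_⟩, ?_⟩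
  · intro u hu v hv h
    rcases Finset.mem_union.1 hu with hu | hu <;> rcases Finset.mem_union.1 hv with hv | hv
    · exact hAA u (hSA hu) v (hSA hv) h
    · exact hST u hu v hv h
    · exact hST v hv u hu h.symm
    · exact hBB u (hTB hu) v (hTB hv) h
  · have : (S ∪ T) ∩ A = S := by
      apply Finset.Subset.antisymm
      · intro x hx
        obtain ⟨hx1, hx2⟩ := Finset.mem_inter.1 hx
        rcases Finset.mem_union.1 hx1 with h | h
        · exact h
        · exact absurd hx2 (Finset.disjoint_right.1 hdisj (hTB h))
      · intro x hx
        exact Finset.mem_inter.2 ⟨Finset.mem_union_left _ hx, hSA hx⟩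
    rw [this, hScard]
  · have : (S ∪ T) ∩ B = T := by
      apply Finset.Subset.antisymm
      · intro x hx
        obtain ⟨hx1, hx2⟩ := Finset.mem_inter.1 hx
        rcases Finset.mem_union.1 hx1 with h | h
        · exact absurd hx2 (Finset.disjoint_left.1 hdisj (hSA h))
        · exact h
      · intro x hx
        exact Finset.mem_inter.2 ⟨Finset.mem_union_right _ hx, hTB hx⟩
    rw [this, hTcard]
  · linarith
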